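/- (Top shift S⁻, inverse shift of a) Let ψ = d+e-a-b-c-1 and η = (a-1)(bc+ψf)/(a(d+e-a) + bc - de + ψf). For parameters ensuring convergence and f ≠ 0, η ≠ 0, the denominator of η nonzero, one has ₄F₃(a,b,c,f+1; d,e,f; 1) = (1 + bc/(ψf)) · ₄F₃(a-1,b,c,η+1; d,e,η; 1). -/

import Mathlib

open Complex

/-- Pochhammer (rising factorial) symbol. -/
noncomputable def poch (a : ℂ) (n : ℕ) : ℂ := ∏ i ∈ Finset.range n, (a + i)

/-- General term of the ₃F₂ series at unit argument. -/
noncomputable def term32 (a b c d e : ℂ) (n : ℕ) : ℂ :=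
  (poch a n * poch b n * poch c n) / ((n.factorial : ℂ) * poch d n * poch e n)

/-- ₃F₂ at unit argument. -/
noncomputable def hyp32 (a b c d e : ℂ) : ℂ := ∑' n : ℕ, term32 a b c d e n

/-- General term of the ₄F₃ series at unit argument. -/
noncomputable def term43 (a₁ a₂ a₃ a₄ b₁ b₂ b₃ : ℂ) (n : ℕ) : ℂ :=
  (poch a₁ n * poch a₂ n * poch a₃ n * poch a₄ n) /
    ((n.factorial : ℂ) * poch b₁ n * poch b₂ n * poch b₃ n)

/-- ₄F₃ at unit argument. -/
noncomputable def hyp43 (a₁ a₂ a₃ a₄ b₁ b₂ b₃ : ℂ) : ℂ := ∑' n : ℕ, term43 a₁ a₂ a₃ a₄ b₁ b₂ b₃ n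

/-- `x` is not a nonpositive integer (equivalently, not a pole of `Γ`). -/
def notNonposInt (x : ℂ) : Prop := ∀ n : ℕ, x ≠ -(n : ℂ)

lemma poch_succ (x : ℂ) (n : ℕ) : poch x (n+1) = poch x n * (x + n) := by
  simp [poch, Finset.prod_range_succ]

lemma poch_shift (x : ℂ) (n : ℕ) : poch x n * (x + n) = x * poch (x+1) n := by
  rw [← poch_succ, poch, Finset.prod_range_succ', poch]
  simp only [Nat.cast_zero, add_zero, Nat.cast_add, Nat.cast_one]
  rw [mul_comm]
  congr 1
  apply Finset.prod_congr rfl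
  intro i _
  ring

lemma poch_ne_zero {x : ℂ} (hx : notNonposInt x) (n : ℕ) : poch x n ≠ 0 := by
  rw [poch, Finset.prod_ne_zero_iff]
  intro i _ h
  exact hx i (by linear_combination h)

lemma shift_ne_zero {x : ℂ} (hx : notNonposInt x) (n : ℕ) : x + n ≠ 0 := by
  intro h
  exact hx n (by linear_combination h)

/-- `g` function for the telescoping: first argument is `A = a - 1`. -/
noncomputable def gaux (A b c d e f ψ : ℂ) (n : ℕ) : ℂ :=
  (n : ℂ) * (d + n - 1) * (e + n - 1) * term32 A b c d e n / (A * f * ψ)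

lemma poch_shift' {x : ℂ} (hx : x ≠ 0) (n : ℕ) :
    poch (x + 1) n = poch x n * (x + n) / x := by
  rw [eq_div_iff hx, mul_comm, ← poch_shift]

set_option maxHeartbeats 1000000 in
lemma scalar_id (A b c d e f ψ η : ℂ) (n : ℂ)
    (hψ : ψ = d + e - (A + 1) - b - c - 1)
    (hden : (A + 1) * (d + e - (A + 1)) + b * c - d * e + ψ * f ≠ 0)
    (hη : η = A * (b * c + ψ * f) / ((A + 1) * (d + e - (A + 1)) + b * c - d * e + ψ * f))
    (hf : f ≠ 0) (hψ0 : ψ ≠ 0) (hA : A ≠ 0) (hη0 : η ≠ 0) :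
    (A + n) * (f + n) / (A * f)
      - (1 + b * c / (ψ * f)) * ((η + n) / η)
    = (n * (d + n - 1) * (e + n - 1)) / (A * f * ψ)
      - ((A + n) * (b + n) * (c + n)) / (A * f * ψ) := by
  have hnum : A * (b * c + ψ * f) ≠ 0 := by
    intro h0
    exact hη0 (by rw [hη, h0, zero_div])
  have hden' : (A + 1) * (d + e - (A + 1)) + b * c - d * e + f * ψ ≠ 0 := by
    rw [mul_comm f ψ]; exact hden
  have hbc : b * c + f * ψ ≠ 0 := by
    rw [mul_comm f ψ]; exact right_ne_zero_of_mul hnum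
  subst hψ
  rw [hη]
  field_simp
  ring

set_option maxHeartbeats 1000000 in
lemma key_telescope (a b c d e f ψ η : ℂ)
    (hψ : ψ = d + e - a - b - c - 1)
    (hden : a * (d + e - a) + b * c - d * e + ψ * f ≠ 0)
    (hη : η = (a - 1) * (b * c + ψ * f) / (a * (d + e - a) + b * c - d * e + ψ * f))
    (hf : f ≠ 0) (hψ0 : ψ ≠ 0) (hA : a - 1 ≠ 0) (hη0 : η ≠ 0)
    (hd : notNonposInt d) (he : notNonposInt e) (hfp : notNonposInt f)
    (hηp : notNonposInt η) (n : ℕ) :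
    term43 a b c (f + 1) d e f n - (1 + b * c / (ψ * f)) * term43 (a - 1) b c (η + 1) d e η n
      = gaux (a - 1) b c d e f ψ n - gaux (a - 1) b c d e f ψ (n + 1) := by
  obtain ⟨A, rfl⟩ : ∃ A, a = A + 1 := ⟨a - 1, by ring⟩
  simp only [add_sub_cancel_right] at *
  have hpd := poch_ne_zero hd n
  have hpe := poch_ne_zero he n
  have hpf := poch_ne_zero hfp n
  have hpη := poch_ne_zero hηp n
  have hfac : ((n.factorial : ℕ) : ℂ) ≠ 0 := Nat.cast_ne_zero.2 n.factorial_ne_zero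
  have hdn := shift_ne_zero hd n
  have hen := shift_ne_zero he n
  have hn1 : ((n : ℂ) + 1) ≠ 0 := by
    intro h
    have h2 : ((n + 1 : ℕ) : ℂ) = 0 := by push_cast; linear_combination h
    exact Nat.cast_ne_zero.2 (Nat.succ_ne_zero n) h2
  have ha1 : poch (A + 1) n = poch A n * (A + n) / A := poch_shift' hA n
  have hf1 : poch (f + 1) n = poch f n * (f + n) / f := poch_shift' hf n
  have hη1 : poch (η + 1) n = poch η n * (η + n) / η := poch_shift' hη0 n
  set S := poch A n * poch b n * poch c n / ((n.factorial : ℂ) * poch d n * poch e n) with hS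
  have hu : term43 (A + 1) b c (f + 1) d e f n = S * ((A + n) * (f + n) / (A * f)) := by
    rw [term43, ha1, hf1, hS]
    field_simp [hA, hf, hpd, hpe, hpf, hfac]
    try rw [div_eq_iff (by simp [hA, hf, hpd, hpe, hpf, hfac])]
    try rw [eq_div_iff (by simp [hA, hf, hpd, hpe, hpf, hfac])]
  have hv : term43 A b c (η + 1) d e η n = S * ((η + n) / η) := by
    rw [term43, hη1, hS]
    field_simp [hη0, hpd, hpe, hpη, hfac]
    try rw [div_eq_iff (by simp [hη0, hpd, hpe, hpη, hfac])]
    try rw [eq_div_iff (by simp [hη0, hpd, hpe, hpη, hfac])]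
  have hg1 : gaux A b c d e f ψ n
      = S * ((n : ℂ) * (d + (n : ℂ) - 1) * (e + (n : ℂ) - 1) / (A * f * ψ)) := by
    rw [gaux, term32, hS]
    field_simp [hA, hf, hψ0, hpd, hpe, hfac]
    try rw [div_eq_iff (by simp [hA, hf, hψ0, hpd, hpe, hfac])]
    try rw [eq_div_iff (by simp [hA, hf, hψ0, hpd, hpe, hfac])]
  have hg2 : gaux A b c d e f ψ (n + 1)
      = S * ((A + n) * (b + n) * (c + n) / (A * f * ψ)) := by
    rw [gaux, term32, poch_succ, poch_succ, poch_succ, poch_succ, poch_succ,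
      Nat.factorial_succ, hS]
    push_cast
    field_simp [hA, hf, hψ0, hpd, hpe, hfac, hdn, hen, hn1]
    try rw [div_eq_iff (by simp [hA, hf, hψ0, hpd, hpe, hfac, hdn, hen, hn1])]
    try rw [eq_div_iff (by simp [hA, hf, hψ0, hpd, hpe, hfac, hdn, hen, hn1])]
    ring
  rw [hu, hv, hg1, hg2]
  linear_combination S * scalar_id A b c d e f ψ η n hψ hden hη hf hψ0 hA hη0

set_option maxHeartbeats 1000000 in
lemma key_E (A b c d e f ψ : ℂ) (hA : A ≠ 0) (hf : f ≠ 0) (hψ0 : ψ ≠ 0)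
    (hd : notNonposInt d) (he : notNonposInt e) (hfp : notNonposInt f) (n : ℕ) :
    (n : ℂ) * (d + n - 1) * (e + n - 1) * term43 (A + 1) b c (f + 1) d e f n
      = ψ * (A + n) * (f + n) * gaux A b c d e f ψ n := by
  have hpd := poch_ne_zero hd n
  have hpe := poch_ne_zero he n
  have hpf := poch_ne_zero hfp n
  have hfac : ((n.factorial : ℕ) : ℂ) ≠ 0 := Nat.cast_ne_zero.2 n.factorial_ne_zero
  rw [term43, gaux, term32, poch_shift' hA n, poch_shift' hf n]
  field_simp [hA, hf, hψ0, hpd, hpe, hpf, hfac]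
  try rw [div_eq_iff (by simp [hA, hf, hψ0, hpd, hpe, hpf, hfac])]
  try rw [eq_div_iff (by simp [hA, hf, hψ0, hpd, hpe, hpf, hfac])]

lemma harmonic_lower_not_summable {w : ℕ → ℝ} {C : ℝ} (hC : 0 < C)
    (h : ∀ᶠ n : ℕ in Filter.atTop, C / n ≤ w n) : ¬ Summable w := by
  intro hs
  obtain ⟨N, hN⟩ := Filter.eventually_atTop.mp h
  have hs' : Summable (fun n : ℕ => w (n + N)) := (summable_nat_add_iff N).mpr hs
  have hsum2 : Summable (fun n : ℕ => C / ((n + N : ℕ) : ℝ)) := by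
    apply Summable.of_nonneg_of_le (fun n => by positivity)
      (fun n => hN (n + N) (Nat.le_add_left N n)) hs'
  have hsum3 : Summable (fun n : ℕ => C / (n : ℝ)) := (summable_nat_add_iff N).mp hsum2
  have hsum4 : Summable (fun n : ℕ => 1 / (n : ℝ)) := by
    have h5 := hsum3.mul_left C⁻¹
    have heq : (fun n : ℕ => C⁻¹ * (C / (n : ℝ))) = fun n : ℕ => 1 / (n : ℝ) := by
      funext n
      field_simp
    rwa [heq] at h5
  exact Real.not_summable_one_div_natCast hsum4

lemma norm_add_nat_lower (x : ℂ) (n : ℕ) : (n : ℝ) - ‖x‖ ≤ ‖x + n‖ := by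
  have h := norm_sub_norm_le ((n : ℂ)) (-x)
  rw [sub_neg_eq_add, norm_neg] at h
  rw [add_comm]
  simpa using h

lemma norm_add_nat_upper (x : ℂ) (n : ℕ) : ‖x + n‖ ≤ ‖x‖ + n := by
  have h := norm_add_le x ((n : ℂ))
  simpa using h


set_option maxHeartbeats 1000000 in
theorem stmt14 (a b c d e f : ℂ) (ψ η : ℂ)
    (hψ : ψ = d + e - a - b - c - 1)
    (hden : a * (d + e - a) + b * c - d * e + ψ * f ≠ 0)
    (hη : η = (a - 1) * (b * c + ψ * f) / (a * (d + e - a) + b * c - d * e + ψ * f))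
    (hf : f ≠ 0) (hψ0 : ψ ≠ 0) (hη0 : η ≠ 0)
    (hconv : 0 < ψ.re)
    (hd : notNonposInt d) (he : notNonposInt e) (hfp : notNonposInt f)
    (hηp : notNonposInt η)
    (h1 : Summable (term43 a b c (f + 1) d e f))
    (h2 : Summable (term43 (a - 1) b c (η + 1) d e η)) :
    hyp43 a b c (f + 1) d e f =
      (1 + b * c / (ψ * f)) * hyp43 (a - 1) b c (η + 1) d e η := by
  have hA : a - 1 ≠ 0 := fun h => hη0 (by rw [hη, h, zero_mul, zero_div])
  set C := 1 + b * c / (ψ * f) with hC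
  set g := gaux (a - 1) b c d e f ψ with hgdef
  have hkey : ∀ n, term43 a b c (f + 1) d e f n - C * term43 (a - 1) b c (η + 1) d e η n
      = g n - g (n + 1) := fun n =>
    key_telescope a b c d e f ψ η hψ hden hη hf hψ0 hA hη0 hd he hfp hηp n
  have h3 : Summable (fun n =>
      term43 a b c (f + 1) d e f n - C * term43 (a - 1) b c (η + 1) d e η n) :=
    h1.sub (h2.mul_left C)
  set T := ∑' n, (term43 a b c (f + 1) d e f n - C * term43 (a - 1) b c (η + 1) d e η n)
    with hT
  have hg0 : g 0 = 0 := by simp [hgdef, gaux]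
  have htends : Filter.Tendsto g Filter.atTop (nhds (-T)) := by
    have h4 := h3.hasSum.tendsto_sum_nat
    have h5 : (fun N => ∑ i ∈ Finset.range N,
        (term43 a b c (f + 1) d e f i - C * term43 (a - 1) b c (η + 1) d e η i))
        = fun N => - g N := by
      funext N
      rw [Finset.sum_congr rfl (fun i _ => hkey i), Finset.sum_range_sub' g N, hg0, zero_sub]
    rw [h5] at h4
    simpa using h4.neg
  have hEn : ∀ n : ℕ, (n : ℂ) * (d + n - 1) * (e + n - 1) * term43 a b c (f + 1) d e f n
      = ψ * ((a - 1) + n) * (f + n) * g n := by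
    intro n
    have h := key_E (a - 1) b c d e f ψ hA hf hψ0 hd he hfp n
    rwa [show (a - 1) + 1 = a from by ring] at h
  have hTzero : T = 0 := by
    by_contra hT0
    have hψn : (0:ℝ) < ‖ψ‖ := norm_pos_iff.mpr hψ0
    have hL : (0:ℝ) < ‖-T‖ := norm_pos_iff.mpr (neg_ne_zero.mpr hT0)
    have hnormtend : Filter.Tendsto (fun n => ‖g n‖) Filter.atTop (nhds ‖-T‖) := htends.norm
    have hev1 : ∀ᶠ n : ℕ in Filter.atTop, ‖-T‖ / 2 ≤ ‖g n‖ :=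
      hnormtend.eventually (eventually_ge_nhds (by linarith))
    have hcast : Filter.Tendsto (fun n : ℕ => (n : ℝ)) Filter.atTop Filter.atTop :=
      tendsto_natCast_atTop_atTop
    have hc0pos : (0:ℝ) < ‖ψ‖ * ‖-T‖ / 32 := by positivity
    have hbound : ∀ᶠ n : ℕ in Filter.atTop,
        ‖ψ‖ * ‖-T‖ / 32 / n ≤ ‖term43 a b c (f + 1) d e f n‖ := by
      filter_upwards [hev1, hcast.eventually_ge_atTop (2 * ‖a - 1‖),
        hcast.eventually_ge_atTop (2 * ‖f‖), hcast.eventually_ge_atTop (‖d - 1‖),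
        hcast.eventually_ge_atTop (‖e - 1‖), hcast.eventually_ge_atTop 1]
        with n hgn hna hnf hnd hne hn1
      have hNpos : (0:ℝ) < n := by linarith
      have hEn' := congrArg norm (hEn n)
      simp only [norm_mul, Complex.norm_natCast] at hEn'
      have hB1 : (n:ℝ) / 2 ≤ ‖a - 1 + (n:ℂ)‖ := by
        have := norm_add_nat_lower (a - 1) n
        linarith [norm_nonneg (a - 1)]
      have hB2 : (n:ℝ) / 2 ≤ ‖f + (n:ℂ)‖ := by
        have := norm_add_nat_lower f n
        linarith [norm_nonneg f]
      have hA1 : ‖d + (n:ℂ) - 1‖ ≤ 2 * n := by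
        have h := norm_add_nat_upper (d - 1) n
        rw [show d - 1 + (n:ℂ) = d + n - 1 from by ring] at h
        linarith
      have hA2 : ‖e + (n:ℂ) - 1‖ ≤ 2 * n := by
        have h := norm_add_nat_upper (e - 1) n
        rw [show e - 1 + (n:ℂ) = e + n - 1 from by ring] at h
        linarith
      have step1 : ‖ψ‖ * ((n:ℝ)/2) * ((n:ℝ)/2) * (‖-T‖/2)
          ≤ ‖ψ‖ * ‖a - 1 + (n:ℂ)‖ * ‖f + (n:ℂ)‖ * ‖g n‖ := by
        gcongr
      have step2 : (n:ℝ) * ‖d + (n:ℂ) - 1‖ * ‖e + (n:ℂ) - 1‖ * ‖term43 a b c (f + 1) d e f n‖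
          ≤ (n:ℝ) * (2*(n:ℝ)) * (2*(n:ℝ)) * ‖term43 a b c (f + 1) d e f n‖ := by
        gcongr <;> positivity
      have h8 : ‖ψ‖ * ((n:ℝ)/2) * ((n:ℝ)/2) * (‖-T‖/2)
          ≤ (n:ℝ) * (2*(n:ℝ)) * (2*(n:ℝ)) * ‖term43 a b c (f + 1) d e f n‖ :=
        step1.trans (hEn'.ge.trans step2)
      have hN2 : (0:ℝ) < (n:ℝ)^2 := by positivity
      rw [div_le_iff₀ hNpos]
      have h9 : ‖ψ‖ * ‖-T‖ / 32 * ((n:ℝ)^2)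
          ≤ (‖term43 a b c (f + 1) d e f n‖ * (n:ℝ)) * ((n:ℝ)^2) := by nlinarith [h8]
      exact le_of_mul_le_mul_right h9 hN2
    exact harmonic_lower_not_summable hc0pos hbound (summable_norm_iff.mpr h1)
  have h10 : T = (∑' n, term43 a b c (f + 1) d e f n)
      - C * ∑' n, term43 (a - 1) b c (η + 1) d e η n := by
    rw [hT, Summable.tsum_sub h1 (h2.mul_left C), tsum_mul_left]
  have h11 : (∑' n, term43 a b c (f + 1) d e f n)
      - C * ∑' n, term43 (a - 1) b c (η + 1) d e η n = 0 := by rw [← h10, hTzero]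
  simp only [hyp43]
  linear_combination h11
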